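/- The functions g(t) = log|t| + μ (for any μ ∈ ℝ) and an arbitrary C² function f satisfy the type-III minimal surface equation: -e^{2(f+g)}(g''+g'²) + e^{-2g}(t²f'²g'² + f'² - t²f'²g'' - 3tf'²g' + tf''g' - f'') - 2f'²g'² + tf'²g'³ + tf''g'³ - f''g'² - f'²g'' = 0 on {t > 0}. -/

import Mathlib

theorem typeIII_minimal_log_g (mu : ℝ) (f : ℝ → ℝ)
    (hf : Differentiable ℝ f) (hf' : Differentiable ℝ (deriv f)) :
    ∀ s : ℝ, ∀ t : ℝ, 0 < t →
      -Real.exp (2 * (f s + (fun t => Real.log t + mu) t)) *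
          (deriv (deriv (fun t => Real.log t + mu)) t
            + (deriv (fun t => Real.log t + mu) t) ^ 2)
        + Real.exp (-(2 * (fun t => Real.log t + mu) t)) *
          (t ^ 2 * (deriv f s) ^ 2 * (deriv (fun t => Real.log t + mu) t) ^ 2
            + (deriv f s) ^ 2
            - t ^ 2 * (deriv f s) ^ 2 * deriv (deriv (fun t => Real.log t + mu)) t
            - 3 * t * (deriv f s) ^ 2 * deriv (fun t => Real.log t + mu) t
            + t * deriv (deriv f) s * deriv (fun t => Real.log t + mu) t
            - deriv (deriv f) s)
        - 2 * (deriv f s) ^ 2 * (deriv (fun t => Real.log t + mu) t) ^ 2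
        + t * (deriv f s) ^ 2 * (deriv (fun t => Real.log t + mu) t) ^ 3
        + t * deriv (deriv f) s * (deriv (fun t => Real.log t + mu) t) ^ 3
        - deriv (deriv f) s * (deriv (fun t => Real.log t + mu) t) ^ 2
        - (deriv f s) ^ 2 * deriv (deriv (fun t => Real.log t + mu)) t = 0 := by
  intro s t ht
  have hg : deriv (fun t : ℝ => Real.log t + mu) = fun t : ℝ => t⁻¹ := by
    funext x
    rw [deriv_add_const]
    exact Real.deriv_log x
  have hg2 : deriv (deriv (fun t : ℝ => Real.log t + mu)) t = -(t ^ 2)⁻¹ := by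
    rw [hg]; exact deriv_inv
  rw [hg2, hg]
  have htne : t ≠ 0 := ne_of_gt ht
  have h1 : (-(t ^ 2)⁻¹ + (t⁻¹) ^ 2 : ℝ) = 0 := by field_simp; ring
  have h2 : (t ^ 2 * (deriv f s) ^ 2 * (t⁻¹) ^ 2 + (deriv f s) ^ 2
      - t ^ 2 * (deriv f s) ^ 2 * (-(t ^ 2)⁻¹) - 3 * t * (deriv f s) ^ 2 * t⁻¹
      + t * deriv (deriv f) s * t⁻¹ - deriv (deriv f) s : ℝ) = 0 := by
    field_simp
    ring
  simp only [h1, h2, mul_zero]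
  field_simp
  ring
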